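/- Zhedanov relations for the Verde-Star operator pair: let K_1, K_2 act on sequences f = (f_n) by (K_1 f)_n = h_n f_n + g_{n+1} f_{n+1} and (K_2 f)_n = x_n f_n + f_{n-1} (with f_{-1}=0), where x_k = b_1 q^k + b_2 q^{-k}, h_k = a_1 q^k + a_2 q^{-k}, g_k = d_3 q^{2k} + d_1 q^k + d_0 + d_2 q^{-k} + d_4 q^{-2k} with d_0+d_1+d_2+d_3+d_4 = 0, d_3 = q^{-1} a_1 b_1, d_4 = q a_2 b_2. Then (q+q^{-1}) K_2 K_1 K_2 − K_2² K_1 − K_1 K_2² = C_1 K_1 + D K_2 + G_1, where C_1 = (q−q^{-1})² b_1 b_2, D = −(q^{1/2}−q^{-1/2})²((q^{-1/2}a_1 − q^{1/2}a_2)(q^{-1/2}b_1 − q^{1/2}b_2) + d_1 + d_2), and G_1 = (q^{1/2}−q^{-1/2})(q−q^{-1})(q^{-1/2}b_1 d_2 + q^{1/2}b_2 d_1). -/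
import Mathlib


variable {F : Type*} [Field F]

/-- The operator `K₁`: `(K₁ f)_n = h_n f_n + g_{n+1} f_{n+1}`. -/
def K1 (h g : ℕ → F) (f : ℕ → F) : ℕ → F := fun n => h n * f n + g (n + 1) * f (n + 1)

/-- The operator `K₂`: `(K₂ f)_n = x_n f_n + f_{n-1}` (with `f_{-1} = 0`). -/
def K2 (x : ℕ → F) (f : ℕ → F) : ℕ → F :=
  fun n => x n * f n + if n = 0 then 0 else f (n - 1)

set_option maxHeartbeats 4000000 in
/-- First Zhedanov relation
`(q+q⁻¹) K₂K₁K₂ − K₂²K₁ − K₁K₂² = C₁K₁ + DK₂ + G₁`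
for the Verde-Star operator pair, with
`x_k = b₁q^k + b₂q^{-k}`, `h_k = a₁q^k + a₂q^{-k}`,
`g_k = d₃q^{2k} + d₁q^k + d₀ + d₂q^{-k} + d₄q^{-2k}`,
`Σdᵢ = 0`, `d₃ = q⁻¹a₁b₁`, `d₄ = qa₂b₂`, and `s` a square root of `q`. -/
theorem stmt14 (q s a1 a2 b1 b2 d0 d1 d2 d3 d4 : F)
    (hq : q ≠ 0) (hq2 : q ^ 2 ≠ 1) (hs : s ^ 2 = q) (hs0 : s ≠ 0)
    (hsum : d0 + d1 + d2 + d3 + d4 = 0)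
    (hd3 : d3 = q⁻¹ * a1 * b1) (hd4 : d4 = q * a2 * b2)
    (x h g : ℕ → F)
    (hx : ∀ k, x k = b1 * q ^ k + b2 * q ^ (-(k : ℤ)))
    (hh : ∀ k, h k = a1 * q ^ k + a2 * q ^ (-(k : ℤ)))
    (hg : ∀ k, g k = d3 * q ^ (2 * k) + d1 * q ^ k + d0 +
        d2 * q ^ (-(k : ℤ)) + d4 * q ^ (-(2 * k : ℤ))) :
    ∀ (f : ℕ → F) (n : ℕ),
      (q + q⁻¹) * K2 x (K1 h g (K2 x f)) n
          - K2 x (K2 x (K1 h g f)) n - K1 h g (K2 x (K2 x f)) n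
        = (q - q⁻¹) ^ 2 * b1 * b2 * K1 h g f n
          + (-(s - s⁻¹) ^ 2 * ((s⁻¹ * a1 - s * a2) * (s⁻¹ * b1 - s * b2) + d1 + d2))
              * K2 x f n
          + (s - s⁻¹) * (q - q⁻¹) * (s⁻¹ * b1 * d2 + s * b2 * d1) * f n := by
  subst hd3 hd4
  have e1 : (-(s - s⁻¹) ^ 2 * ((s⁻¹ * a1 - s * a2) * (s⁻¹ * b1 - s * b2) + d1 + d2))
      = -(q + q⁻¹ - 2) * (q⁻¹ * a1 * b1 - a1 * b2 - a2 * b1 + q * a2 * b2 + d1 + d2) := by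
    subst hs
    have h2 : (s : F) ^ 2 ≠ 0 := pow_ne_zero _ hs0
    field_simp
    ring
  have e2 : (s - s⁻¹) * (q - q⁻¹) * (s⁻¹ * b1 * d2 + s * b2 * d1)
      = (q - q⁻¹) * (b1 * d2 - b2 * d1 + q * b2 * d1 - q⁻¹ * b1 * d2) := by
    subst hs
    have h2 : (s : F) ^ 2 ≠ 0 := pow_ne_zero _ hs0
    field_simp
    ring
  rw [e1, e2]
  have hd0 : d0 = -(d1 + d2 + (q⁻¹ * a1 * b1) + (q * a2 * b2)) := by
    linear_combination hsum
  subst hd0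
  have hpow : ∀ k : ℕ, (q : F) ^ (-(k:ℤ)) = (q^k)⁻¹ := by
    intro k; rw [zpow_neg, zpow_natCast]
  have hpow2 : ∀ k : ℕ, (q : F) ^ (-(2*k:ℤ)) = ((q^k)⁻¹)^2 := by
    intro k
    have h2 : (-(2 * k : ℤ)) = -((2*k : ℕ) : ℤ) := by push_cast; ring
    rw [h2, zpow_neg, zpow_natCast, inv_pow, ← pow_mul, mul_comm k 2]
  have hqu : q * q⁻¹ = 1 := mul_inv_cancel₀ hq
  have hQU : ∀ k : ℕ, (q : F) ^ k * q⁻¹ ^ k = 1 := by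
    intro k; rw [← mul_pow, hqu, one_pow]
  have hA : ∀ k : ℕ, (q + q⁻¹) * (x k * x (k+1)) - x k ^ 2 - x (k+1) ^ 2 = (q - q⁻¹) ^ 2 * b1 * b2 := by
    intro k
    simp only [hx, hh, hg, hpow, hpow2, ← inv_pow]
    linear_combination (2 * b1 * b2 + (q⁻¹ ^ k) ^ 2 * b2 ^ 2 + (q ^ k) ^ 2 * b1 ^ 2) * hqu + ((-2) * b1 * b2 + (q⁻¹) ^ 2 * b1 * b2 + q ^ 2 * b1 * b2) * hQU k
  have hB : ∀ k : ℕ, (q + q⁻¹) * h (k+1) - h k - h (k+2) = 0 := by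
    intro k
    simp only [hx, hh, hg, hpow, hpow2, ← inv_pow]
    linear_combination ((q⁻¹ ^ k) * a2 + (q ^ k) * a1) * hqu
  have hDg : ∀ k : ℕ, (q + q⁻¹) * (x (k+1) ^ 2 * h (k+1) + x (k+1) * g (k+2) + x (k+1) * g (k+1)) - (x (k+1) ^ 2 * h (k+1) + x (k+1) * g (k+1) + x k * g (k+1)) - (h (k+1) * x (k+1) ^ 2 + g (k+2) * (x (k+2) + x (k+1))) = (q - q⁻¹) ^ 2 * b1 * b2 * h (k+1) + (-(q + q⁻¹ - 2) * (q⁻¹ * a1 * b1 - a1 * b2 - a2 * b1 + q * a2 * b2 + d1 + d2)) * x (k+1) + (q - q⁻¹) * (b1 * d2 - b2 * d1 + q * b2 * d1 - q⁻¹ * b1 * d2) := by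
    intro k
    simp only [hx, hh, hg, hpow, hpow2, ← inv_pow]
    linear_combination (b2 * d1 + b1 * d2 + (-1) * (q⁻¹ ^ k) * b2 * d2 + (-1) * (q⁻¹ ^ k) * b2 * d1 + (-1) * (q⁻¹ ^ k) * a2 * b1 * b2 + (-1) * (q⁻¹ ^ k) * a1 * b2 ^ 2 + (-1) * (q ^ k) * b1 * d2 + (-1) * (q ^ k) * b1 * d1 + (-1) * (q ^ k) * a2 * b1 ^ 2 + (-1) * (q ^ k) * a1 * b1 * b2 + (-1) * (q ^ k) * (q⁻¹ ^ k) * b2 * d1 + (-1) * (q ^ k) * (q⁻¹ ^ k) * b1 * d2 + (q ^ k) * (q⁻¹ ^ k) ^ 2 * a2 * b1 * b2 + (q ^ k) * (q⁻¹ ^ k) ^ 2 * a1 * b2 ^ 2 + (q ^ k) ^ 2 * (q⁻¹ ^ k) * a2 * b1 ^ 2 + (q ^ k) ^ 2 * (q⁻¹ ^ k) * a1 * b1 * b2 + 2 * (q⁻¹) * (q⁻¹ ^ k) * a2 * b1 * b2 + (-1) * (q⁻¹) * (q⁻¹ ^ k) * a1 * b1 * b2 + (q⁻¹) * (q⁻¹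 ^ k) ^ 2 * b2 * d2 + (-1) * (q⁻¹) * (q ^ k) * a1 * b1 * b2 + (-1) * (q⁻¹) * (q ^ k) * a1 * b1 ^ 2 + (q⁻¹) * (q ^ k) * (q⁻¹ ^ k) * b2 * d1 + (-4) * (q⁻¹) * (q ^ k) * (q⁻¹ ^ k) ^ 2 * a2 * b1 * b2 + (-2) * (q⁻¹) * (q ^ k) * (q⁻¹ ^ k) ^ 2 * a1 * b2 ^ 2 + (q⁻¹) * (q ^ k) ^ 2 * (q⁻¹ ^ k) * a1 * b1 * b2 + (q⁻¹) ^ 2 * (q⁻¹ ^ k) ^ 2 * b2 * d2 + (q⁻¹) ^ 2 * (q ^ k) * (q⁻¹ ^ k) * b1 * d2 + (q⁻¹) ^ 2 * (q ^ k) * (q⁻¹ ^ k) ^ 2 * a2 * b1 * b2 + (q⁻¹) ^ 2 * (q ^ k) * (q⁻¹ ^ k) ^ 2 * a1 * b2 ^ 2 + 2 * (q⁻¹) ^ 3 * (q⁻¹ ^ k) ^ 3 * a2 * b2 ^ 2 + (q⁻¹) ^ 3 * (q ^ k) * (q⁻¹ ^ k) ^ 2 * a2 * b1 * b2 + (-1)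 * (q⁻¹) ^ 4 * (q⁻¹ ^ k) ^ 3 * a2 * b2 ^ 2 + (-1) * q * (q⁻¹ ^ k) * a2 * b2 ^ 2 + (-1) * q * (q⁻¹ ^ k) * a2 * b1 * b2 + (-1) * q * (q ^ k) * a2 * b1 * b2 + 2 * q * (q ^ k) * a1 * b1 * b2 + q * (q ^ k) * (q⁻¹ ^ k) * b1 * d2 + q * (q ^ k) * (q⁻¹ ^ k) ^ 2 * a2 * b1 * b2 + q * (q ^ k) ^ 2 * b1 * d1 + (-2) * q * (q ^ k) ^ 2 * (q⁻¹ ^ k) * a2 * b1 ^ 2 + (-4) * q * (q ^ k) ^ 2 * (q⁻¹ ^ k) * a1 * b1 * b2 + q * (q⁻¹) * (q ^ k) * (q⁻¹ ^ k) ^ 2 * a2 * b1 * b2 + q * (q⁻¹) * (q ^ k) * (q⁻¹ ^ k) ^ 2 * a1 * b2 ^ 2 + q * (q⁻¹) * (q ^ k) ^ 2 * (q⁻¹ ^ k) * a2 * b1 ^ 2 + q * (q⁻¹) * (q ^ k) ^ 2 * (q⁻¹ ^ k) * a1 * b1 * b2 + q * (q⁻¹) ^ 2 * (q⁻¹ ^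 k) ^ 3 * a2 * b2 ^ 2 + q * (q⁻¹) ^ 2 * (q ^ k) * (q⁻¹ ^ k) ^ 2 * a2 * b1 * b2 + q * (q⁻¹) ^ 2 * (q ^ k) ^ 2 * (q⁻¹ ^ k) * a1 * b1 * b2 + (-1) * q * (q⁻¹) ^ 3 * (q ^ k) * (q⁻¹ ^ k) ^ 2 * a2 * b1 * b2 + q * (q⁻¹) ^ 4 * (q⁻¹ ^ k) ^ 3 * a2 * b2 ^ 2 + q * (q⁻¹) ^ 4 * (q ^ k) * (q⁻¹ ^ k) ^ 2 * a2 * b1 * b2 + q ^ 2 * (q ^ k) * (q⁻¹ ^ k) * b2 * d1 + q ^ 2 * (q ^ k) ^ 2 * b1 * d1 + q ^ 2 * (q ^ k) ^ 2 * (q⁻¹ ^ k) * a2 * b1 ^ 2 + q ^ 2 * (q ^ k) ^ 2 * (q⁻¹ ^ k) * a1 * b1 * b2 + q ^ 2 * (q⁻¹) * (q ^ k) * (q⁻¹ ^ k) ^ 2 * a2 * b1 * b2 + q ^ 2 * (q⁻¹) * (q ^ k) ^ 2 * (q⁻¹ ^ k) * a1 * b1 * b2 + q ^ 2 * (q⁻¹)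 * (q ^ k) ^ 3 * a1 * b1 ^ 2 + q ^ 3 * (q ^ k) ^ 2 * (q⁻¹ ^ k) * a1 * b1 * b2 + 2 * q ^ 3 * (q ^ k) ^ 3 * a1 * b1 ^ 2 + (-1) * q ^ 3 * (q⁻¹) * (q ^ k) ^ 2 * (q⁻¹ ^ k) * a1 * b1 * b2 + (-1) * q ^ 4 * (q ^ k) ^ 3 * a1 * b1 ^ 2 + q ^ 4 * (q⁻¹) * (q ^ k) ^ 2 * (q⁻¹ ^ k) * a1 * b1 * b2 + q ^ 4 * (q⁻¹) * (q ^ k) ^ 3 * a1 * b1 ^ 2) * hqu + ((-1) * b2 * d1 + (-1) * b1 * d2 + (q⁻¹ ^ k) * a2 * b1 * b2 + (q⁻¹ ^ k) * a1 * b2 ^ 2 + (q ^ k) * a2 * b1 ^ 2 + (q ^ k) * a1 * b1 * b2 + (q⁻¹) * b2 * d1 + (-1) * (q⁻¹) * b1 * d2 + (-4) * (q⁻¹) * (q⁻¹ ^ k) * a2 * b1 * b2 + (-2) * (q⁻¹) * (q⁻¹ ^ k) * a1 * b2 ^ 2 + (q⁻¹) * (q ^ k) * a1 * b1 * b2 +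 (q⁻¹) ^ 2 * b1 * d2 + (q⁻¹) ^ 2 * (q⁻¹ ^ k) * a2 * b1 * b2 + (q⁻¹) ^ 2 * (q⁻¹ ^ k) * a1 * b2 ^ 2 + (q⁻¹) ^ 3 * (q⁻¹ ^ k) * a2 * b1 * b2 + (-1) * q * b2 * d1 + q * b1 * d2 + q * (q⁻¹ ^ k) * a2 * b1 * b2 + (-2) * q * (q ^ k) * a2 * b1 ^ 2 + (-4) * q * (q ^ k) * a1 * b1 * b2 + q ^ 2 * b2 * d1 + q ^ 2 * (q ^ k) * a2 * b1 ^ 2 + q ^ 2 * (q ^ k) * a1 * b1 * b2 + q ^ 3 * (q ^ k) * a1 * b1 * b2) * hQU k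
  have hD0 : (q + q⁻¹) * (x 0 ^ 2 * h 0 + x 0 * g 1) - x 0 ^ 2 * h 0 - (h 0 * x 0 ^ 2 + g 1 * (x 1 + x 0)) = (q - q⁻¹) ^ 2 * b1 * b2 * h 0 + (-(q + q⁻¹ - 2) * (q⁻¹ * a1 * b1 - a1 * b2 - a2 * b1 + q * a2 * b2 + d1 + d2)) * x 0 + (q - q⁻¹) * (b1 * d2 - b2 * d1 + q * b2 * d1 - q⁻¹ * b1 * d2) := by
    simp only [hx, hh, hg, hpow, hpow2, ← inv_pow]
    linear_combination (b2 * d2 + b2 * d1 + b1 * d2 + b1 * d1 + 2 * a2 * b2 ^ 2 + 2 * a2 * b1 * b2 + 2 * a1 * b1 * b2 + 2 * a1 * b1 ^ 2 + (-1) * (q⁻¹) * a2 * b2 ^ 2 + (-1) * (q⁻¹) * a2 * b1 * b2 + (q⁻¹) ^ 2 * a2 * b1 * b2 + (-1) * q * a1 * b1 * b2 + (-1) * q * a1 * b1 ^ 2 + q * (q⁻¹) * a2 * b2 ^ 2 + q * (q⁻¹) * a1 * b1 ^ 2 + q ^ 2 * a1 * b1 * b2) * hqu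
  have hC : ∀ k : ℕ, (q + q⁻¹) * (x (k+2) * h (k+2) + h (k+1) * x (k+1) + g (k+2)) - (x (k+2) * h (k+1) + x (k+1) * h (k+1) + g (k+1)) - (h (k+2) * (x (k+2) + x (k+1)) + g (k+3)) = -(q + q⁻¹ - 2) * (q⁻¹ * a1 * b1 - a1 * b2 - a2 * b1 + q * a2 * b2 + d1 + d2) := by
    intro k
    simp only [hx, hh, hg, hpow, hpow2, ← inv_pow]
    linear_combination ((-2) * (q ^ k) * (q⁻¹ ^ k) * a2 * b1 + (-2) * (q ^ k) * (q⁻¹ ^ k) * a1 * b2 + (q⁻¹) * (q⁻¹ ^ k) * d2 + (q⁻¹) * (q ^ k) * (q⁻¹ ^ k) * a2 * b1 + (q⁻¹) * (q ^ k) * (q⁻¹ ^ k) * a1 * b2 + (q⁻¹) ^ 2 * (q⁻¹ ^ k) ^ 2 * a2 * b2 + (q⁻¹) ^ 3 * (q⁻¹ ^ k) ^ 2 * a2 * b2 + (q⁻¹) ^ 4 * (q⁻¹ ^ k) ^ 2 * a2 * b2 + (-1) * (q⁻¹) ^ 5 * (q⁻¹ ^ k) ^ 2 * a2 * b2 + q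 * (q ^ k) * d1 + q * (q ^ k) * (q⁻¹ ^ k) * a2 * b1 + q * (q ^ k) * (q⁻¹ ^ k) * a1 * b2 + (-1) * q * (q⁻¹) * (q ^ k) * (q⁻¹ ^ k) * a2 * b1 + (-1) * q * (q⁻¹) * (q ^ k) * (q⁻¹ ^ k) * a1 * b2 + q * (q⁻¹) ^ 2 * (q ^ k) * (q⁻¹ ^ k) * a2 * b1 + q * (q⁻¹) ^ 2 * (q ^ k) * (q⁻¹ ^ k) * a1 * b2 + q * (q⁻¹) ^ 3 * (q⁻¹ ^ k) ^ 2 * a2 * b2 + q ^ 2 * (q ^ k) ^ 2 * a1 * b1 + q ^ 2 * (q⁻¹) * (q ^ k) * (q⁻¹ ^ k) * a2 * b1 + q ^ 2 * (q⁻¹) * (q ^ k) * (q⁻¹ ^ k) * a1 * b2 + q ^ 3 * (q ^ k) ^ 2 * a1 * b1 + q ^ 3 * (q⁻¹) * (q ^ k) ^ 2 * a1 * b1 + q ^ 4 * (q ^ k) ^ 2 * a1 * b1 + (-1) * q ^ 5 * (q ^ k) ^ 2 * a1 * b1) * hqu + ((-2) * a2 * b1 + (-2) * a1 * b2 + (q⁻¹)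 * a2 * b1 + (q⁻¹) * a1 * b2 + q * a2 * b1 + q * a1 * b2) * hQU k
  have hC1 : (q + q⁻¹) * (x 1 * h 1 + h 0 * x 0 + g 1) - (x 1 * h 0 + x 0 * h 0) - (h 1 * (x 1 + x 0) + g 2) = -(q + q⁻¹ - 2) * (q⁻¹ * a1 * b1 - a1 * b2 - a2 * b1 + q * a2 * b2 + d1 + d2) := by
    simp only [hx, hh, hg, hpow, hpow2, ← inv_pow]
    linear_combination (d2 + d1 + a2 * b2 + (-1) * a2 * b1 + (-1) * a1 * b2 + a1 * b1 + (q⁻¹) * a2 * b2 + (q⁻¹) * a2 * b1 + (q⁻¹) * a1 * b2 + (q⁻¹) ^ 2 * a2 * b2 + (-1) * (q⁻¹) ^ 3 * a2 * b2 + q * a2 * b1 + q * a1 * b2 + q * a1 * b1 + q * (q⁻¹) * a2 * b2 + q * (q⁻¹) * a1 * b1 + q ^ 2 * a1 * b1 + (-1) * q ^ 3 * a1 * b1) * hqu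
  intro f n
  match n with
  | 0 =>
    simp only [K1, K2]
    norm_num
    linear_combination (g 1 * f 1) * hA 0 + f 0 * hD0
  | 1 =>
    simp only [K1, K2]
    norm_num
    linear_combination (g 2 * f 2) * hA 1 + f 1 * hDg 0 + f 0 * hC1
  | (m+2) =>
    simp only [K1, K2]
    have i1 : m + 2 - 1 = m + 1 := rfl
    have i2 : m + 1 - 1 = m := rfl
    simp only [Nat.add_sub_cancel, i1, i2, if_neg (Nat.succ_ne_zero _),
      Nat.succ_ne_zero, if_false]
    linear_combination (g (m+3) * f (m+3)) * hA (m+2) + f (m+2) * hDg (m+1)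
      + f (m+1) * hC m + f m * hB m
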